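/- arXiv:2501.03543 — 3 statements merged into one kernel-verified Lean document; each statement's English description precedes it below -/
import Mathlib

section
/- Fix X ∈ ℝ^d, sample points ξ^1,…,ξ^S ∈ Ξ, ε ∈ (0,1] and r > 0, and let Ξ*(X) := {ξ ∈ Ξ : h̄(X,ξ) = h̄*(X)} be the (nonempty) set of maximizers of h̄(X,·) over Ξ. Then the supremum sup_{P'∈D_r(P̂_S)} q_{1−ε}(h̄(X,·), P') is attained by some probability measure P* ∈ D_r(P̂_S) whose support is contained in the finite union {ξ^1,…,ξ^S} ∪ Ξ*(X). -/
open MeasureTheory Finset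
open scoped ENNReal NNReal

noncomputable section

open Classical in
/-- Relative entropy `I(μ,ν)`: `∫ log(dμ/dν) dμ` if `μ ≪ ν`, and `+∞` otherwise. -/
def relEntropy {α : Type*} [MeasurableSpace α] (μ ν : Measure α) : EReal :=
  if μ ≪ ν then ((∫ x, Real.log (μ.rnDeriv ν x).toReal ∂μ : ℝ) : EReal) else ⊤

/-- The ambiguity set `D_r(P)`: Borel probability measures supported in `Ξ`
with `I(P, P') ≤ r`. -/
def ambiguity {α : Type*} [MeasurableSpace α] (Ξ : Set α) (r : ℝ) (P : Measure α) :
    Set (Measure α) :=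
  {P' | IsProbabilityMeasure P' ∧ P' Ξᶜ = 0 ∧ relEntropy P P' ≤ (r : EReal)}

/-- Empirical distribution of the sample points `ξ^1, …, ξ^S`. -/
def empirical {α : Type*} [MeasurableSpace α] {S : ℕ} (ξ : Fin S → α) : Measure α :=
  (S : ℝ≥0∞)⁻¹ • ∑ j, Measure.dirac (ξ j)

/-- `h̄(X, ξ) = max_{ℓ ∈ [m]} h_ℓ(X, ξ)`. -/
def hbarF {d n m : ℕ} [NeZero m] (h : (Fin d → ℝ) → (Fin n → ℝ) → Fin m → ℝ)
    (X : Fin d → ℝ) (ζ : Fin n → ℝ) : ℝ :=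
  Finset.univ.sup' Finset.univ_nonempty fun ℓ => h X ζ ℓ

/-- `h̄*(X) = max_{ξ ∈ Ξ} h̄(X, ξ)`. -/
def hstarF {d n m : ℕ} [NeZero m] (Ξ : Set (Fin n → ℝ))
    (h : (Fin d → ℝ) → (Fin n → ℝ) → Fin m → ℝ) (X : Fin d → ℝ) : ℝ :=
  sSup (hbarF h X '' Ξ)

/-- Feasibility of the optimization problem (★) at the integer `k`. -/
def StarFeasible (S : ℕ) (ε r : ℝ) (k : ℕ) : Prop :=
  1 ≤ k ∧ k ≤ S ∧ ∃ p : Fin (S + 1) → ℝ,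
    (∀ j, 0 ≤ p j) ∧ (∀ j : Fin (S + 1), (j : ℕ) < S → 0 < p j) ∧ (∑ j, p j) = 1 ∧
    (∑ j ∈ Finset.univ.filter (fun j : Fin (S + 1) => (j : ℕ) < k), p j) ≤ 1 - ε ∧
    -(1 / (S : ℝ)) * ∑ j ∈ Finset.univ.filter (fun j : Fin (S + 1) => (j : ℕ) < S),
      Real.log ((S : ℝ) * p j) ≤ r

/-- `k(ε, r, S)`: the optimal value of problem (★). -/
def kStar (S : ℕ) (ε r : ℝ) : ℕ := sSup {k | StarFeasible S ε r k}

/-- The `k`-th smallest element (counted with multiplicity) of the multiset of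
values of `v`. -/
def kthSmallest {N : ℕ} (v : Fin N → ℝ) (k : ℕ) : ℝ :=
  (Multiset.sort (Multiset.ofList (List.ofFn v)) (· ≤ ·)).getD (k - 1) 0

/-- The `α`-quantile `q_α(F, P) = sup {q | P({ξ : F(ξ) ≤ q}) ≤ α}`. -/
def quantile {α : Type*} [MeasurableSpace α] (a : ℝ) (F : α → ℝ) (P : Measure α) : ℝ :=
  sSup {q : ℝ | P {x | F x ≤ q} ≤ ENNReal.ofReal a}

section Aux

variable {α : Type*} [MeasurableSpace α] [MeasurableSingletonClass α]

lemma myIntegrableDirac (f : α → ℝ) (a : α) : Integrable f (Measure.dirac a) := by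
  have h : f =ᵐ[Measure.dirac a] fun _ => f a := by
    rw [MeasureTheory.ae_dirac_eq]; exact Filter.eventually_pure.2 rfl
  exact (integrable_const (f a)).congr h.symm

lemma myIntegralEmpirical {S : ℕ} (ξ : Fin S → α) (f : α → ℝ) :
    ∫ x, f x ∂(empirical ξ) = (S : ℝ)⁻¹ * ∑ j, f (ξ j) := by
  rw [empirical, integral_smul_measure,
    integral_finset_sum_measure (fun j _ => myIntegrableDirac f (ξ j))]
  simp [integral_dirac, smul_eq_mul]

omit [MeasurableSingletonClass α] in
lemma myEmpiricalApply {S : ℕ} (ξ : Fin S → α) (s : Set α) :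
    empirical ξ s = (S : ℝ≥0∞)⁻¹ * ∑ j, Measure.dirac (ξ j) s := by
  rw [empirical, Measure.smul_apply, Measure.finset_sum_apply, smul_eq_mul]

lemma myEmpiricalSingleton {S : ℕ} (hS : S ≠ 0) (ξ : Fin S → α) (j : Fin S) :
    empirical ξ {ξ j} ≠ 0 := by
  rw [myEmpiricalApply]
  refine mul_ne_zero (by simp [hS]) ?_
  have h1 : Measure.dirac (ξ j) {ξ j} = 1 := by simp
  have : (1 : ℝ≥0∞) ≤ ∑ i, Measure.dirac (ξ i) {ξ j} := by
    rw [← h1]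
    exact Finset.single_le_sum (f := fun i => Measure.dirac (ξ i) {ξ j})
      (fun i _ => zero_le) (Finset.mem_univ j)
  intro h0; rw [h0] at this; exact (not_le.2 zero_lt_one) this

lemma myEmpiricalProb {S : ℕ} (hS : S ≠ 0) (ξ : Fin S → α) :
    IsProbabilityMeasure (empirical ξ) := by
  constructor
  rw [myEmpiricalApply]
  simp [Finset.card_univ, ENNReal.inv_mul_cancel, hS]

lemma myEmpiricalAC {S : ℕ} (ξ : Fin S → α) (ν : Measure α) (hν : ∀ j, ν {ξ j} ≠ 0) :
    empirical ξ ≪ ν := by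
  refine Measure.AbsolutelyContinuous.mk fun s hs h0 => ?_
  have hj : ∀ j, ξ j ∉ s := by
    intro j hmem
    exact hν j (le_antisymm (h0 ▸ measure_mono (Set.singleton_subset_iff.2 hmem)) (zero_le))
  rw [myEmpiricalApply]
  have : ∀ j : Fin S, Measure.dirac (ξ j) s = 0 := fun j => by
    rw [Measure.dirac_apply' _ hs, Set.indicator_of_notMem (hj j)]
  simp [this]

lemma myACAtom {S : ℕ} (hS : S ≠ 0) (ξ : Fin S → α) {ν : Measure α}
    (hac : empirical ξ ≪ ν) (j : Fin S) : ν {ξ j} ≠ 0 := by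
  intro h0
  exact myEmpiricalSingleton hS ξ j (hac h0)

lemma myRnDerivAtom (μ ν : Measure α) [IsFiniteMeasure μ] [IsFiniteMeasure ν]
    (hac : μ ≪ ν) (x : α) (hx : ν {x} ≠ 0) :
    (μ.rnDeriv ν x).toReal = (μ {x}).toReal / (ν {x}).toReal := by
  have key : ν {x} * μ.rnDeriv ν x = μ {x} := by
    rw [mul_comm, ← Measure.setLIntegral_rnDeriv hac {x}, lintegral_singleton]
  have h' : μ.rnDeriv ν x = μ {x} / ν {x} :=
    (ENNReal.eq_div_iff hx (measure_ne_top ν {x})).2 key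
  rw [h', ENNReal.toReal_div]

lemma myRelEntropyEmpirical {S : ℕ} (hS : S ≠ 0) (ξ : Fin S → α) (ν : Measure α)
    [IsFiniteMeasure ν] (hac : empirical ξ ≪ ν) :
    relEntropy (empirical ξ) ν =
      (((S : ℝ)⁻¹ * ∑ j, Real.log ((empirical ξ {ξ j}).toReal / (ν {ξ j}).toReal) : ℝ) : EReal) := by
  haveI := myEmpiricalProb hS ξ
  rw [relEntropy, if_pos hac, myIntegralEmpirical]
  norm_cast
  refine congrArg _ (Finset.sum_congr rfl fun j _ => ?_)
  rw [myRnDerivAtom _ _ hac _ (myACAtom hS ξ hac j)]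

lemma myRelEntropyMono {S : ℕ} (hS : S ≠ 0) (ξ : Fin S → α) (ν₁ ν₂ : Measure α)
    [IsFiniteMeasure ν₁] [IsFiniteMeasure ν₂] (hac : empirical ξ ≪ ν₁)
    (hle : ∀ j, ν₁ {ξ j} ≤ ν₂ {ξ j}) :
    relEntropy (empirical ξ) ν₂ ≤ relEntropy (empirical ξ) ν₁ := by
  haveI := myEmpiricalProb hS ξ
  have h2 : ∀ j, ν₂ {ξ j} ≠ 0 := fun j h0 =>
    myACAtom hS ξ hac j (le_antisymm (h0 ▸ hle j) (zero_le))
  rw [myRelEntropyEmpirical hS ξ ν₁ hac, myRelEntropyEmpirical hS ξ ν₂ (myEmpiricalAC ξ ν₂ h2)]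
  rw [EReal.coe_le_coe_iff]
  refine mul_le_mul_of_nonneg_left (Finset.sum_le_sum fun j _ => ?_) (by positivity)
  have he : 0 < (empirical ξ {ξ j}).toReal :=
    ENNReal.toReal_pos (myEmpiricalSingleton hS ξ j) (measure_ne_top _ _)
  have h1 : 0 < (ν₁ {ξ j}).toReal :=
    ENNReal.toReal_pos (myACAtom hS ξ hac j) (measure_ne_top _ _)
  have h2' : (ν₁ {ξ j}).toReal ≤ (ν₂ {ξ j}).toReal :=
    ENNReal.toReal_le_toReal (measure_ne_top _ _) (measure_ne_top _ _) |>.2 (hle j)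
  have h2pos : 0 < (ν₂ {ξ j}).toReal := lt_of_lt_of_le h1 h2'
  have hpos : 0 < (empirical ξ {ξ j}).toReal / (ν₂ {ξ j}).toReal := div_pos he h2pos
  exact Real.log_le_log hpos (by gcongr)

end Aux


/-- The supremum `sup_{P' ∈ D_r(P̂_S)} q_{1−ε}(h̄(X,·), P')` is attained by a measure
`P* ∈ D_r(P̂_S)` supported in the union of the sample points and the set
`Ξ*(X)` of maximizers of `h̄(X,·)` over `Ξ`. -/
theorem stmt2 {n d m S : ℕ} [NeZero m] (hS : 1 ≤ S)
    (Ξ : Set (Fin n → ℝ)) (hΞ : IsCompact Ξ) (hΞne : Ξ.Nonempty)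
    (ξ : Fin S → (Fin n → ℝ)) (hξ : ∀ j, ξ j ∈ Ξ)
    (h : (Fin d → ℝ) → (Fin n → ℝ) → Fin m → ℝ)
    (hcont : Continuous fun p : (Fin d → ℝ) × (Fin n → ℝ) => h p.1 p.2)
    (ε r : ℝ) (hε0 : 0 < ε) (hε1 : ε ≤ 1) (hr : 0 < r)
    (X : Fin d → ℝ) :
    ∃ Pstar ∈ ambiguity Ξ r (empirical ξ),
      Pstar ((Set.range ξ ∪ {ζ ∈ Ξ | hbarF h X ζ = hstarF Ξ h X})ᶜ) = 0 ∧
      quantile (1 - ε) (hbarF h X) Pstar =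
        sSup {v : ℝ | ∃ P' ∈ ambiguity Ξ r (empirical ξ),
          v = quantile (1 - ε) (hbarF h X) P'} := by
  classical
  have hSne : S ≠ 0 := Nat.one_le_iff_ne_zero.mp hS
  haveI hPemp : IsProbabilityMeasure (empirical ξ) := myEmpiricalProb hSne ξ
  set F := hbarF h X with hF
  -- continuity of F
  have Fcont : Continuous F := by
    have hc : ∀ ℓ : Fin m, Continuous fun ζ : Fin n → ℝ => h X ζ ℓ := fun ℓ =>
      (continuous_apply ℓ).comp (hcont.comp (Continuous.prodMk_right X))
    have := Continuous.finset_sup' (f := fun (ℓ : Fin m) (ζ : Fin n → ℝ) => h X ζ ℓ)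
      Finset.univ_nonempty (fun ℓ _ => hc ℓ)
    convert this using 1
    funext ζ
    rw [hF, hbarF, Finset.sup'_apply]
  -- maximizer and minimizer
  obtain ⟨xs, hxsΞ, hxsmax⟩ := hΞ.exists_isMaxOn hΞne Fcont.continuousOn
  have hxsmax' : ∀ ζ ∈ Ξ, F ζ ≤ F xs := fun ζ hζ => hxsmax hζ
  obtain ⟨xm, hxmΞ, hxmmin⟩ := hΞ.exists_isMinOn hΞne Fcont.continuousOn
  have hxmmin' : ∀ ζ ∈ Ξ, F xm ≤ F ζ := fun ζ hζ => hxmmin hζ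
  have hstar_eq : hstarF Ξ h X = F xs := by
    refine IsGreatest.csSup_eq ⟨⟨xs, hxsΞ, rfl⟩, ?_⟩
    rintro v ⟨ζ, hζ, rfl⟩
    exact hxsmax' ζ hζ
  have ha1 : ENNReal.ofReal (1 - ε) < 1 := ENNReal.ofReal_lt_one.2 (by linarith)
  have hmeas : ∀ q : ℝ, MeasurableSet {x | F x ≤ q} := fun q =>
    measurableSet_le Fcont.measurable measurable_const
  have hΞmeas : MeasurableSet Ξ := hΞ.isClosed.measurableSet
  -- elements of the quantile set are < F xs
  have hAlt : ∀ ν : Measure (Fin n → ℝ), IsProbabilityMeasure ν → ν Ξᶜ = 0 →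
      ∀ q : ℝ, ν {x | F x ≤ q} ≤ ENNReal.ofReal (1 - ε) → q < F xs := by
    intro ν hp h0 q hq
    haveI := hp
    by_contra hlt
    push_neg at hlt
    have hsub : Ξ ⊆ {x | F x ≤ q} := fun ζ hζ => le_trans (hxsmax' ζ hζ) hlt
    have h1 : (1 : ℝ≥0∞) ≤ ν Ξ := by
      have hle := measure_union_le (μ := ν) Ξ Ξᶜ
      rw [Set.union_compl_self, h0, add_zero, measure_univ] at hle
      exact hle
    have : (1 : ℝ≥0∞) ≤ ENNReal.ofReal (1 - ε) :=
      le_trans (le_trans h1 (measure_mono hsub)) hq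
    exact absurd this (not_le.2 ha1)
  -- nonemptiness witness of the quantile set
  have hAne : ∀ ν : Measure (Fin n → ℝ), ν Ξᶜ = 0 →
      ν {x | F x ≤ F xm - 1} ≤ ENNReal.ofReal (1 - ε) := by
    intro ν h0
    have hsub : {x | F x ≤ F xm - 1} ⊆ Ξᶜ := by
      intro x hx hmem
      have h1 := hxmmin' x hmem
      have h2 : F x ≤ F xm - 1 := hx
      linarith
    calc ν {x | F x ≤ F xm - 1} ≤ ν Ξᶜ := measure_mono hsub
      _ = 0 := h0
      _ ≤ ENNReal.ofReal (1 - ε) := zero_le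
  set R : Set (Fin n → ℝ) := Set.range ξ with hR
  have hRmeas : MeasurableSet R := (Set.finite_range ξ).measurableSet
  set red : Measure (Fin n → ℝ) → Measure (Fin n → ℝ) :=
    fun ν => ν.restrict R + (1 - ν R) • Measure.dirac xs with hred
  have hred_apply : ∀ (ν : Measure (Fin n → ℝ)) (s : Set (Fin n → ℝ)), MeasurableSet s →
      red ν s = ν (s ∩ R) + (1 - ν R) * Measure.dirac xs s := by
    intro ν s hs
    rw [hred]
    simp [Measure.restrict_apply hs, smul_eq_mul]
  -- red ν dominates ν on singletons of the sample
  have hred_atom : ∀ (ν : Measure (Fin n → ℝ)) (j : Fin S), ν {ξ j} ≤ red ν {ξ j} := by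
    intro ν j
    rw [hred_apply ν _ (measurableSet_singleton _),
      Set.inter_eq_self_of_subset_left (Set.singleton_subset_iff.2 (Set.mem_range_self j))]
    exact le_self_add
  have hred_prob : ∀ ν : Measure (Fin n → ℝ), IsProbabilityMeasure ν →
      IsProbabilityMeasure (red ν) := by
    intro ν hp
    haveI := hp
    constructor
    rw [hred_apply ν _ MeasurableSet.univ, Set.univ_inter, measure_univ, mul_one]
    exact add_tsub_cancel_of_le prob_le_one
  have hred_null : ∀ ν : Measure (Fin n → ℝ), ν Ξᶜ = 0 → red ν Ξᶜ = 0 := by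
    intro ν h0
    rw [hred_apply ν _ hΞmeas.compl]
    have h1 : ν (Ξᶜ ∩ R) = 0 := le_antisymm (h0 ▸ measure_mono Set.inter_subset_left) (zero_le)
    have h2 : Measure.dirac xs Ξᶜ = 0 := by
      rw [Measure.dirac_apply' _ hΞmeas.compl, Set.indicator_of_notMem (by simp [hxsΞ])]
    rw [h1, h2, mul_zero, add_zero]
  -- absolute continuity from finite entropy
  have hac_of : ∀ ν : Measure (Fin n → ℝ), relEntropy (empirical ξ) ν ≤ (r : EReal) →
      empirical ξ ≪ ν := by
    intro ν hent
    by_contra hn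
    rw [relEntropy, if_neg hn] at hent
    exact absurd hent (not_le.2 (EReal.coe_lt_top r))
  have hred_amb : ∀ ν ∈ ambiguity Ξ r (empirical ξ), red ν ∈ ambiguity Ξ r (empirical ξ) := by
    rintro ν ⟨hp, h0, hent⟩
    haveI := hp
    haveI := hred_prob ν hp
    refine ⟨hred_prob ν hp, hred_null ν h0, le_trans ?_ hent⟩
    exact myRelEntropyMono hSne ξ ν (red ν) (hac_of ν hent) (hred_atom ν)
  -- quantile monotone under red
  have hquant_mono : ∀ ν ∈ ambiguity Ξ r (empirical ξ),
      quantile (1 - ε) F ν ≤ quantile (1 - ε) F (red ν) := by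
    rintro ν ⟨hp, h0, hent⟩
    haveI := hp
    have hsub : {q : ℝ | ν {x | F x ≤ q} ≤ ENNReal.ofReal (1 - ε)} ⊆
        {q : ℝ | red ν {x | F x ≤ q} ≤ ENNReal.ofReal (1 - ε)} := by
      intro q hq
      have hqlt : q < F xs := hAlt ν hp h0 q hq
      show red ν {x | F x ≤ q} ≤ ENNReal.ofReal (1 - ε)
      rw [hred_apply ν _ (hmeas q)]
      have hd : Measure.dirac xs {x | F x ≤ q} = 0 := by
        rw [Measure.dirac_apply' _ (hmeas q), Set.indicator_of_notMem]
        simp only [Set.mem_setOf_eq, not_le]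
        exact hqlt
      rw [hd, mul_zero, add_zero]
      exact le_trans (measure_mono Set.inter_subset_left) hq
    have hkey : sSup {q : ℝ | ν {x | F x ≤ q} ≤ ENNReal.ofReal (1 - ε)} ≤
        sSup {q : ℝ | red ν {x | F x ≤ q} ≤ ENNReal.ofReal (1 - ε)} :=
      csSup_le_csSup ⟨F xs, fun q hq => (hAlt (red ν) (hred_prob ν hp) (hred_null ν h0) q hq).le⟩
        ⟨F xm - 1, hAne ν h0⟩ hsub
    exact hkey
  -- the finite set of candidate values
  set W : Finset ℝ := insert (F xs) (Finset.univ.image fun j => F (ξ j)) with hW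
  have hWmem : ∀ x ∈ R ∪ {xs}, F x ∈ W := by
    rintro x (⟨j, rfl⟩ | hx)
    · exact Finset.mem_insert_of_mem (Finset.mem_image_of_mem _ (Finset.mem_univ j))
    · rw [Set.mem_singleton_iff] at hx
      rw [hx]
      exact Finset.mem_insert_self _ _
  have hred_supp : ∀ ν : Measure (Fin n → ℝ), red ν ((R ∪ {xs})ᶜ) = 0 := by
    intro ν
    have hmeas' : MeasurableSet ((R ∪ {xs})ᶜ) :=
      (hRmeas.union (measurableSet_singleton xs)).compl
    rw [hred_apply ν _ hmeas']
    have h1 : (R ∪ {xs})ᶜ ∩ R = ∅ := by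
      ext x
      simp only [Set.mem_inter_iff, Set.mem_compl_iff, Set.mem_union, Set.mem_empty_iff_false,
        iff_false, not_and]
      tauto
    have h2 : Measure.dirac xs ((R ∪ {xs})ᶜ) = 0 := by
      rw [Measure.dirac_apply' _ hmeas', Set.indicator_of_notMem]
      simp
    rw [h1, measure_empty, h2, mul_zero, add_zero]
  -- quantile of a measure supported on R ∪ {xs} lies in W
  have hquantW : ∀ μ : Measure (Fin n → ℝ), IsProbabilityMeasure μ → μ Ξᶜ = 0 →
      μ ((R ∪ {xs})ᶜ) = 0 → quantile (1 - ε) F μ ∈ (W : Set ℝ) := by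
    intro μ hp h0 hsupp
    set A := {q : ℝ | μ {x | F x ≤ q} ≤ ENNReal.ofReal (1 - ε)} with hA
    have hqt : quantile (1 - ε) F μ = sSup A := rfl
    have hAne' : A.Nonempty := ⟨F xm - 1, hAne μ h0⟩
    have hAbdd : BddAbove A := ⟨F xs, fun q hq => (hAlt μ hp h0 q hq).le⟩
    rw [hqt]
    set t := sSup A with htdef
    by_contra htW
    have hsex : ∃ s : ℝ, s < t ∧ ∀ w ∈ W, w < t → w ≤ s := by
      by_cases hne : (W.filter (fun w => w < t)).Nonempty
      · refine ⟨(W.filter (fun w => w < t)).max' hne, ?_, ?_⟩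
        · exact (Finset.mem_filter.1 ((W.filter (fun w => w < t)).max'_mem hne)).2
        · intro w hw hwt
          exact Finset.le_max' (W.filter (fun w => w < t)) w (Finset.mem_filter.2 ⟨hw, hwt⟩)
      · refine ⟨t - 1, by linarith, ?_⟩
        intro w hw hwt
        exact absurd ⟨w, Finset.mem_filter.2 ⟨hw, hwt⟩⟩ hne
    obtain ⟨s, hslt, hsle⟩ := hsex
    have huex : ∃ u : ℝ, t < u ∧ ∀ w ∈ W, t < w → u ≤ w := by
      by_cases hne : (W.filter (fun w => t < w)).Nonempty
      · refine ⟨(W.filter (fun w => t < w)).min' hne, ?_, ?_⟩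
        · exact (Finset.mem_filter.1 ((W.filter (fun w => t < w)).min'_mem hne)).2
        · intro w hw hwt
          exact Finset.min'_le (W.filter (fun w => t < w)) w (Finset.mem_filter.2 ⟨hw, hwt⟩)
      · refine ⟨t + 1, by linarith, ?_⟩
        intro w hw hwt
        exact absurd ⟨w, Finset.mem_filter.2 ⟨hw, hwt⟩⟩ hne
    obtain ⟨u, hult, hule⟩ := huex
    obtain ⟨q, hqA, hsq⟩ := exists_lt_of_lt_csSup hAne' hslt
    have h1 : t < (t + u) / 2 := by linarith
    have h2 : (t + u) / 2 < u := by linarith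
    have hsub : {x | F x ≤ (t + u) / 2} ⊆ {x | F x ≤ q} ∪ (R ∪ {xs})ᶜ := by
      intro x hx
      by_cases hxS : x ∈ R ∪ {xs}
      · left
        have hFW : F x ∈ W := hWmem x hxS
        rcases lt_trichotomy (F x) t with hc | hc | hc
        · exact le_trans (hsle _ hFW hc) hsq.le
        · exact absurd (Finset.mem_coe.2 (hc ▸ hFW)) htW
        · exfalso
          have hxle : F x ≤ (t + u) / 2 := hx
          have := hule _ hFW hc
          linarith
      · right; exact hxS
    have hq'A : (t + u) / 2 ∈ A := by
      show μ {x | F x ≤ (t + u) / 2} ≤ ENNReal.ofReal (1 - ε)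
      calc μ {x | F x ≤ (t + u) / 2} ≤ μ ({x | F x ≤ q} ∪ (R ∪ {xs})ᶜ) := measure_mono hsub
        _ ≤ μ {x | F x ≤ q} + μ ((R ∪ {xs})ᶜ) := measure_union_le _ _
        _ = μ {x | F x ≤ q} := by rw [hsupp, add_zero]
        _ ≤ ENNReal.ofReal (1 - ε) := hqA
    exact absurd (le_csSup hAbdd hq'A) (not_le.2 h1)
  -- the empirical measure belongs to the ambiguity set
  have hembamb : empirical ξ ∈ ambiguity Ξ r (empirical ξ) := by
    refine ⟨hPemp, ?_, ?_⟩
    · rw [myEmpiricalApply]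
      have hz : ∀ j : Fin S, Measure.dirac (ξ j) Ξᶜ = 0 := fun j => by
        rw [Measure.dirac_apply' _ hΞmeas.compl, Set.indicator_of_notMem (by simp [hξ j])]
      simp [hz]
    · rw [myRelEntropyEmpirical hSne ξ (empirical ξ) Measure.AbsolutelyContinuous.rfl]
      have hz : ∀ j : Fin S,
          Real.log ((empirical ξ {ξ j}).toReal / (empirical ξ {ξ j}).toReal) = 0 := fun j => by
        rw [div_self (ENNReal.toReal_pos (myEmpiricalSingleton hSne ξ j)
          (measure_ne_top _ _)).ne', Real.log_one]
      rw [Finset.sum_congr rfl fun j _ => hz j, Finset.sum_const, smul_zero, mul_zero]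
      exact EReal.coe_le_coe_iff.2 hr.le
  -- the support set of the statement
  have hred_supp' : ∀ ν : Measure (Fin n → ℝ),
      red ν ((Set.range ξ ∪ {ζ ∈ Ξ | hbarF h X ζ = hstarF Ξ h X})ᶜ) = 0 := by
    intro ν
    have hsub : (Set.range ξ ∪ {ζ ∈ Ξ | hbarF h X ζ = hstarF Ξ h X})ᶜ ⊆ (R ∪ {xs})ᶜ := by
      apply Set.compl_subset_compl.2
      apply Set.union_subset_union (le_refl R)
      intro x hx
      rw [Set.mem_singleton_iff] at hx
      exact ⟨hx ▸ hxsΞ, by rw [hx, ← hF, hstar_eq]⟩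
    exact le_antisymm (le_trans (measure_mono hsub) (hred_supp ν).le) (zero_le)
  -- final assembly
  set G := {v : ℝ | ∃ P' ∈ ambiguity Ξ r (empirical ξ), v = quantile (1 - ε) F (red P')}
    with hG
  have hGsub : G ⊆ (W : Set ℝ) := by
    rintro v ⟨P', hP', rfl⟩
    obtain ⟨hp, h0, _⟩ := hP'
    exact hquantW (red P') (hred_prob P' hp) (hred_null P' h0) (hred_supp P')
  have hGfin : G.Finite := W.finite_toSet.subset hGsub
  have hGne : G.Nonempty := ⟨quantile (1 - ε) F (red (empirical ξ)), empirical ξ, hembamb, rfl⟩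
  have hMmem := hGne.csSup_mem hGfin
  obtain ⟨P0, hP0amb, hMeq⟩ := hMmem
  refine ⟨red P0, hred_amb P0 hP0amb, hred_supp' P0, ?_⟩
  have hTne : Set.Nonempty {v : ℝ | ∃ P' ∈ ambiguity Ξ r (empirical ξ),
      v = quantile (1 - ε) F P'} := ⟨quantile (1 - ε) F (empirical ξ), empirical ξ, hembamb, rfl⟩
  have hub : ∀ v ∈ {v : ℝ | ∃ P' ∈ ambiguity Ξ r (empirical ξ),
      v = quantile (1 - ε) F P'}, v ≤ sSup G := by
    rintro v ⟨P', hP', rfl⟩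
    exact le_trans (hquant_mono P' hP') (le_csSup hGfin.bddAbove ⟨P', hP', rfl⟩)
  have hMT : sSup G ∈ {v : ℝ | ∃ P' ∈ ambiguity Ξ r (empirical ξ),
      v = quantile (1 - ε) F P'} := ⟨red P0, hred_amb P0 hP0amb, hMeq⟩
  have hfinal : sSup {v : ℝ | ∃ P' ∈ ambiguity Ξ r (empirical ξ),
      v = quantile (1 - ε) F P'} = sSup G :=
    le_antisymm (csSup_le hTne hub) (le_csSup ⟨sSup G, hub⟩ hMT)
  rw [hfinal]
  exact hMeq.symm
end
end

section
/- Let S ≥ 1 and k ∈ {1,…,S} be integers and let ε satisfy 1 − k/S ≤ ε < 1. Then the minimum of −(1/S)∑_{j=1}^S log(S·p_j) over vectors p ∈ ℝ^{S+1} with p_j ≥ 0 for all j, ∑_{j=1}^{S+1} p_j = 1, and ∑_{j=1}^k p_j ≤ 1−ε, equals −(k/S)·log(S(1−ε)/k) − ((S−k)/S)·log(Sε/(S−k)), where the second term is interpreted as 0 when k = S. When k < S the minimum is attained at p_j = (1−ε)/k for j ∈ {1,…,k}, p_j = ε/(S−k) for j ∈ {k+1,…,S}, and p_{S+1} = 0;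 when k = S it is attained at p_j = (1−ε)/S for j ∈ {1,…,S} and p_{S+1} = ε. -/
open Finset

noncomputable section

lemma myfilter_range_lt (n m : ℕ) (hm : m ≤ n) :
    (Finset.range n).filter (fun j => j < m) = Finset.range m := by
  ext x; simp only [mem_filter, mem_range]; omega

lemma mysum_range_ite0 (n m : ℕ) (hm : m ≤ n) (a : ℝ) :
    ∑ j ∈ Finset.range n, (if j < m then a else 0) = m * a := by
  rw [← Finset.sum_filter, myfilter_range_lt n m hm, Finset.sum_const, Finset.card_range,
    nsmul_eq_mul]

lemma mysum_range_ite2 (n m₁ m₂ : ℕ) (h1 : m₁ ≤ m₂) (h2 : m₂ ≤ n) (a b : ℝ) :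
    ∑ j ∈ Finset.range n, (if j < m₁ then a else if j < m₂ then b else 0)
      = m₁ * a + ((m₂ : ℝ) - m₁) * b := by
  have : ∀ j ∈ Finset.range n, (if j < m₁ then a else if j < m₂ then b else 0)
      = (if j < m₁ then a - b else 0) + (if j < m₂ then b else 0) := by
    intro j _
    by_cases hj1 : j < m₁
    · have : j < m₂ := lt_of_lt_of_le hj1 h1
      simp only [if_pos hj1, if_pos this]; ring
    · simp [hj1]
  rw [Finset.sum_congr rfl this, Finset.sum_add_distrib,
    mysum_range_ite0 n m₁ (h1.trans h2) (a - b), mysum_range_ite0 n m₂ h2 b]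
  ring

lemma myfilter_card (n m : ℕ) (hm : m ≤ n) :
    (Finset.univ.filter (fun j : Fin n => (j : ℕ) < m)).card = m := by
  rw [Finset.card_filter, Fin.sum_univ_eq_sum_range (fun j => if j < m then 1 else 0) n,
    ← Finset.sum_filter, myfilter_range_lt n m hm]
  simp

lemma mysum_log_le {α : Type*} (t : Finset α) (q : α → ℝ) (ht : t.Nonempty)
    (hq : ∀ i ∈ t, 0 < q i) :
    ∑ i ∈ t, Real.log (q i) ≤ t.card * Real.log ((∑ i ∈ t, q i) / t.card) := by
  have hcard : (0 : ℝ) < t.card := by exact_mod_cast Finset.card_pos.mpr ht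
  have key := (strictConcaveOn_log_Ioi.concaveOn).le_map_sum (t := t)
    (w := fun _ => ((t.card : ℝ))⁻¹) (p := q)
    (fun i _ => by positivity)
    (by rw [Finset.sum_const, nsmul_eq_mul]; field_simp)
    (fun i hi => hq i hi)
  simp only [smul_eq_mul] at key
  rw [← Finset.mul_sum, ← Finset.mul_sum] at key
  have := mul_le_mul_of_nonneg_left key (le_of_lt hcard)
  rw [← mul_assoc, mul_inv_cancel₀ hcard.ne', one_mul, inv_mul_eq_div] at this
  exact this

lemma mylog_comb_mono (c d : ℝ) (hc : 0 < c) (hd : 0 < d) {a b : ℝ} (ha : 0 < a)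
    (hab : a ≤ b) (hb : b ≤ c / (c + d)) :
    c * Real.log a + d * Real.log (1 - a) ≤ c * Real.log b + d * Real.log (1 - b) := by
  have hcd : 0 < c + d := by linarith
  have hb1 : b < 1 := lt_of_le_of_lt hb (by rw [div_lt_one hcd]; linarith)
  set f : ℝ → ℝ := fun x => c * Real.log x + d * Real.log (1 - x) with hf
  have hderiv : ∀ x ∈ Set.Ioo a b, HasDerivAt f (c * x⁻¹ + d * ((1 - x)⁻¹ * (-1))) x := by
    intro x hx
    have hx0 : 0 < x := lt_trans ha hx.1
    have hx1 : x < 1 := lt_trans hx.2 hb1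
    have h1 : HasDerivAt (fun x : ℝ => c * Real.log x) (c * x⁻¹) x :=
      (Real.hasDerivAt_log hx0.ne').const_mul c
    have h2 : HasDerivAt (fun x : ℝ => 1 - x) (-1) x := by
      simpa using (hasDerivAt_id x).const_sub 1
    have h3 : HasDerivAt (fun x : ℝ => Real.log (1 - x)) ((1 - x)⁻¹ * (-1)) x :=
      (Real.hasDerivAt_log (by linarith : (1 : ℝ) - x ≠ 0)).comp x h2
    exact h1.add (h3.const_mul d)
  have hmono : MonotoneOn f (Set.Icc a b) := by
    have hint : interior (Set.Icc a b) = Set.Ioo a b := interior_Icc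
    apply monotoneOn_of_deriv_nonneg (convex_Icc a b)
    · apply ContinuousOn.add
      · exact continuousOn_const.mul (Real.continuousOn_log.mono (fun x hx => by
          simp only [Set.mem_compl_iff, Set.mem_singleton_iff]
          have := hx.1; intro h; rw [h] at this; linarith))
      · apply continuousOn_const.mul
        apply Real.continuousOn_log.comp (continuous_const.sub continuous_id).continuousOn
        intro x hx
        simp only [Set.mem_compl_iff, Set.mem_singleton_iff, id]
        intro h
        have hxb : x ≤ b := hx.2
        have : x = 1 := by have h' : 1 - x = 0 := h; linarith
        linarith
    · rw [hint]
      intro x hx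
      exact ((hderiv x hx).differentiableAt).differentiableWithinAt
    · rw [hint]
      intro x hx
      rw [(hderiv x hx).deriv]
      have hx0 : 0 < x := lt_trans ha hx.1
      have hx1 : x < 1 := lt_trans hx.2 hb1
      have hxb : x ≤ c / (c + d) := le_of_lt (lt_of_lt_of_le hx.2 hb)
      have hnum : x * (c + d) ≤ c := (le_div_iff₀ hcd).mp hxb
      have : d / (1 - x) ≤ c / x := by
        rw [div_le_div_iff₀ (by linarith) hx0]; nlinarith
      have heq : c * x⁻¹ + d * ((1 - x)⁻¹ * (-1)) = c / x - d / (1 - x) := by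
        field_simp; ring
      rw [heq]; linarith
  exact hmono (Set.left_mem_Icc.mpr hab) (Set.right_mem_Icc.mpr hab) hab


/-- The optimal solution of the minimization problem: for `k < S`, put `(1−ε)/k` on the
first `k` coordinates, `ε/(S−k)` on coordinates `k+1,…,S`, and `0` on coordinate `S+1`;
for `k = S`, put `(1−ε)/S` on the first `S` coordinates and `ε` on coordinate `S+1`. -/
def pOpt (S k : ℕ) (ε : ℝ) : Fin (S + 1) → ℝ := fun j =>
  if k < S then
    (if (j : ℕ) < k then (1 - ε) / k else if (j : ℕ) < S then ε / ((S : ℝ) - k) else 0)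
  else (if (j : ℕ) < S then (1 - ε) / S else ε)

/-- The minimum of `−(1/S)∑_{j=1}^S log(S·p_j)` over the feasible set equals
`−(k/S)·log(S(1−ε)/k) − ((S−k)/S)·log(Sε/(S−k))` and is attained at `pOpt`. -/
theorem stmt5 (S k : ℕ) (hS : 1 ≤ S) (hk1 : 1 ≤ k) (hkS : k ≤ S) (ε : ℝ)
    (hε1 : 1 - (k : ℝ) / S ≤ ε) (hε2 : ε < 1) :
    IsLeast
      {v : ℝ | ∃ p : Fin (S + 1) → ℝ,
        (∀ j, 0 ≤ p j) ∧ (∀ j : Fin (S + 1), (j : ℕ) < S → 0 < p j) ∧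
        (∑ j, p j) = 1 ∧
        (∑ j ∈ Finset.univ.filter (fun j : Fin (S + 1) => (j : ℕ) < k), p j) ≤ 1 - ε ∧
        v = -(1 / (S : ℝ)) * ∑ j ∈ Finset.univ.filter (fun j : Fin (S + 1) => (j : ℕ) < S),
              Real.log ((S : ℝ) * p j)}
      (-((k : ℝ) / S) * Real.log ((S : ℝ) * (1 - ε) / k)
        - (((S : ℝ) - k) / S) * Real.log ((S : ℝ) * ε / ((S : ℝ) - k))) ∧
    (∀ j, 0 ≤ pOpt S k ε j) ∧
    (∀ j : Fin (S + 1), (j : ℕ) < S → 0 < pOpt S k ε j) ∧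
    (∑ j, pOpt S k ε j) = 1 ∧
    (∑ j ∈ Finset.univ.filter (fun j : Fin (S + 1) => (j : ℕ) < k), pOpt S k ε j) ≤ 1 - ε ∧
    -(1 / (S : ℝ)) * ∑ j ∈ Finset.univ.filter (fun j : Fin (S + 1) => (j : ℕ) < S),
        Real.log ((S : ℝ) * pOpt S k ε j) =
      -((k : ℝ) / S) * Real.log ((S : ℝ) * (1 - ε) / k)
        - (((S : ℝ) - k) / S) * Real.log ((S : ℝ) * ε / ((S : ℝ) - k)) := by
  have hfacts : (∀ j, 0 ≤ pOpt S k ε j) ∧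
      (∀ j : Fin (S + 1), (j : ℕ) < S → 0 < pOpt S k ε j) ∧
      (∑ j, pOpt S k ε j) = 1 ∧
      (∑ j ∈ Finset.univ.filter (fun j : Fin (S + 1) => (j : ℕ) < k), pOpt S k ε j) ≤ 1 - ε ∧
      -(1 / (S : ℝ)) * ∑ j ∈ Finset.univ.filter (fun j : Fin (S + 1) => (j : ℕ) < S),
          Real.log ((S : ℝ) * pOpt S k ε j) =
        -((k : ℝ) / S) * Real.log ((S : ℝ) * (1 - ε) / k)
          - (((S : ℝ) - k) / S) * Real.log ((S : ℝ) * ε / ((S : ℝ) - k)) := by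

      have hS' : (0:ℝ) < S := by exact_mod_cast hS
      have hk' : (0:ℝ) < k := by exact_mod_cast hk1
      have h1ε : (0:ℝ) < 1 - ε := by linarith
      by_cases hlt : k < S
      · -- case k < S
        have hd : (0:ℝ) < (S:ℝ) - k := by
          have : (k:ℝ) < S := by exact_mod_cast hlt
          linarith
        have hε0 : (0:ℝ) < ε := by
          have : (k:ℝ)/S < 1 := by
            rw [div_lt_one hS']; exact_mod_cast hlt
          linarith
        set a : ℝ := (1 - ε)/k with ha_def
        set b : ℝ := ε/((S:ℝ) - k) with hb_def
        have ha : 0 < a := by positivity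
        have hb : 0 < b := by positivity
        have hvals : ∀ j : Fin (S+1), pOpt S k ε j
            = (fun n : ℕ => if n < k then a else if n < S then b else 0) (j : ℕ) := by
          intro j; simp only [pOpt, if_pos hlt]; rfl
        refine ⟨?_, ?_, ?_, ?_, ?_⟩
        · intro j; rw [hvals j]; dsimp only
          split_ifs <;> positivity
        · intro j hj; rw [hvals j]; dsimp only
          by_cases h1 : (j:ℕ) < k
          · rw [if_pos h1]; exact ha
          · rw [if_neg h1, if_pos hj]; exact hb
        · rw [Finset.sum_congr rfl (fun j _ => hvals j),
            Fin.sum_univ_eq_sum_range (fun n => if n < k then a else if n < S then b else 0) (S+1),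
            mysum_range_ite2 (S+1) k S hkS (Nat.le_succ S) a b]
          rw [ha_def, hb_def, mul_div_cancel₀ _ hk'.ne', mul_div_cancel₀ _ hd.ne']
          ring
        · rw [Finset.sum_filter]
          have hcongr : ∀ j : Fin (S+1), (if (j:ℕ) < k then pOpt S k ε j else 0)
              = (fun n : ℕ => if n < k then a else 0) (j:ℕ) := by
            intro j; by_cases h : (j:ℕ) < k
            · simp only [if_pos h, hvals j]
            · simp [h]
          rw [Finset.sum_congr rfl (fun j _ => hcongr j),
            Fin.sum_univ_eq_sum_range (fun n => if n < k then a else 0) (S+1),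
            mysum_range_ite0 (S+1) k (by omega) a]
          rw [ha_def, mul_div_cancel₀ _ hk'.ne']
        · rw [Finset.sum_filter]
          have hcongr : ∀ j : Fin (S+1), (if (j:ℕ) < S then Real.log ((S:ℝ) * pOpt S k ε j) else 0)
              = (fun n : ℕ => if n < k then Real.log ((S:ℝ)*a) else
                  if n < S then Real.log ((S:ℝ)*b) else 0) (j:ℕ) := by
            intro j
            by_cases h1 : (j:ℕ) < k
            · have h2 : (j:ℕ) < S := lt_of_lt_of_le h1 hkS
              simp only [if_pos h1, if_pos h2, hvals j]
            · by_cases h2 : (j:ℕ) < S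
              · simp only [if_pos h2, if_neg h1, hvals j]
              · simp [h1, h2]
          rw [Finset.sum_congr rfl (fun j _ => hcongr j),
            Fin.sum_univ_eq_sum_range (fun n => if n < k then Real.log ((S:ℝ)*a) else
              if n < S then Real.log ((S:ℝ)*b) else 0) (S+1),
            mysum_range_ite2 (S+1) k S hkS (Nat.le_succ S) _ _]
          rw [ha_def, hb_def, ← mul_div_assoc, ← mul_div_assoc]
          ring
      · -- case k = S
        have hks : k = S := by omega
        subst hks
        set a : ℝ := (1 - ε)/k with ha_def
        have ha : 0 < a := by positivity
        have hε0 : (0:ℝ) ≤ ε := by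
          have : (k:ℝ)/k = 1 := div_self hk'.ne'
          linarith
        have hvals : ∀ j : Fin (k+1), pOpt k k ε j
            = (fun n : ℕ => if n < k then a else ε) (j : ℕ) := by
          intro j; simp only [pOpt, if_neg hlt]; rfl
        refine ⟨?_, ?_, ?_, ?_, ?_⟩
        · intro j; rw [hvals j]; dsimp only
          split_ifs
          · exact ha.le
          · exact hε0
        · intro j hj; rw [hvals j]; dsimp only [if_pos hj]; rw [if_pos hj]; exact ha
        · rw [Finset.sum_congr rfl (fun j _ => hvals j),
            Fin.sum_univ_eq_sum_range (fun n => if n < k then a else ε) (k+1),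
            Finset.sum_range_succ]
          rw [if_neg (lt_irrefl k)]
          have : ∀ j ∈ Finset.range k, (if j < k then a else ε) = a := by
            intro j hj; rw [if_pos (Finset.mem_range.mp hj)]
          rw [Finset.sum_congr rfl this, Finset.sum_const, Finset.card_range, nsmul_eq_mul,
            ha_def, mul_div_cancel₀ _ hk'.ne']
          ring
        · rw [Finset.sum_filter]
          have hcongr : ∀ j : Fin (k+1), (if (j:ℕ) < k then pOpt k k ε j else 0)
              = (fun n : ℕ => if n < k then a else 0) (j:ℕ) := by
            intro j; by_cases h : (j:ℕ) < k
            · simp only [if_pos h, hvals j]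
            · simp [h]
          rw [Finset.sum_congr rfl (fun j _ => hcongr j),
            Fin.sum_univ_eq_sum_range (fun n => if n < k then a else 0) (k+1),
            mysum_range_ite0 (k+1) k (by omega) a]
          rw [ha_def, mul_div_cancel₀ _ hk'.ne']
        · rw [Finset.sum_filter]
          have hcongr : ∀ j : Fin (k+1), (if (j:ℕ) < k then Real.log ((k:ℝ) * pOpt k k ε j) else 0)
              = (fun n : ℕ => if n < k then Real.log ((k:ℝ)*a) else 0) (j:ℕ) := by
            intro j; by_cases h : (j:ℕ) < k
            · simp only [if_pos h, hvals j]
            · simp [h]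
          rw [Finset.sum_congr rfl (fun j _ => hcongr j),
            Fin.sum_univ_eq_sum_range (fun n => if n < k then Real.log ((k:ℝ)*a) else 0) (k+1),
            mysum_range_ite0 (k+1) k (by omega) _]
          rw [sub_self, zero_div, zero_mul, sub_zero, ha_def, ← mul_div_assoc]
          field_simp
  have hlb : ∀ v ∈ {v : ℝ | ∃ p : Fin (S + 1) → ℝ,
      (∀ j, 0 ≤ p j) ∧ (∀ j : Fin (S + 1), (j : ℕ) < S → 0 < p j) ∧
      (∑ j, p j) = 1 ∧
      (∑ j ∈ Finset.univ.filter (fun j : Fin (S + 1) => (j : ℕ) < k), p j) ≤ 1 - ε ∧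
      v = -(1 / (S : ℝ)) * ∑ j ∈ Finset.univ.filter (fun j : Fin (S + 1) => (j : ℕ) < S),
            Real.log ((S : ℝ) * p j)},
      (-((k : ℝ) / S) * Real.log ((S : ℝ) * (1 - ε) / k)
        - (((S : ℝ) - k) / S) * Real.log ((S : ℝ) * ε / ((S : ℝ) - k))) ≤ v := by

      have hS' : (0:ℝ) < S := by exact_mod_cast hS
      have hk' : (0:ℝ) < k := by exact_mod_cast hk1
      have h1ε : (0:ℝ) < 1 - ε := by linarith
      rintro v ⟨p, hp0, hppos, hsum, hAle, hv⟩
      set T1 := Finset.univ.filter (fun j : Fin (S + 1) => (j : ℕ) < k) with hT1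
      set TS := Finset.univ.filter (fun j : Fin (S + 1) => (j : ℕ) < S) with hTS
      have hT1card : T1.card = k := myfilter_card (S+1) k (by omega)
      have hTScard : TS.card = S := myfilter_card (S+1) S (by omega)
      set A := ∑ j ∈ T1, p j with hA_def
      have hT1ne : T1.Nonempty := Finset.card_pos.mp (by rw [hT1card]; omega)
      have hT1pos : ∀ j ∈ T1, 0 < p j := by
        intro j hj
        have : (j:ℕ) < k := (Finset.mem_filter.mp hj).2
        exact hppos j (lt_of_lt_of_le this hkS)
      have hApos : 0 < A := Finset.sum_pos hT1pos hT1ne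
      by_cases hlt : k < S
      · -- k < S
        set d : ℝ := (S:ℝ) - k with hd_def
        have hd : 0 < d := by
          have : (k:ℝ) < S := by exact_mod_cast hlt
          rw [hd_def]; linarith
        have hε0 : (0:ℝ) < ε := by
          have : (k:ℝ)/S < 1 := by
            rw [div_lt_one hS']; exact_mod_cast hlt
          linarith
        set T2 := Finset.univ.filter (fun j : Fin (S + 1) => k ≤ (j : ℕ) ∧ (j : ℕ) < S) with hT2
        have hT2card : T2.card = S - k := by
          rw [hT2, Finset.card_filter,
            Fin.sum_univ_eq_sum_range (fun j => if k ≤ j ∧ j < S then 1 else 0) (S+1),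
            ← Finset.sum_filter]
          have : (Finset.range (S+1)).filter (fun j => k ≤ j ∧ j < S) = Finset.Ico k S := by
            ext x; simp only [mem_filter, mem_range, Finset.mem_Ico]; omega
          rw [this]; simp [Nat.card_Ico]
        have hdisj : Disjoint T1 T2 := by
          rw [Finset.disjoint_left]
          intro j h1 h2
          have := (Finset.mem_filter.mp h1).2
          have := (Finset.mem_filter.mp h2).2.1
          omega
        have hUnion : TS = T1 ∪ T2 := by
          ext j
          simp only [hTS, hT1, hT2, Finset.mem_union, Finset.mem_filter, Finset.mem_univ, true_and]
          omega
        set B := ∑ j ∈ T2, p j with hB_def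
        have hT2ne : T2.Nonempty := Finset.card_pos.mp (by rw [hT2card]; omega)
        have hT2pos : ∀ j ∈ T2, 0 < p j := by
          intro j hj
          exact hppos j (Finset.mem_filter.mp hj).2.2
        have hBpos : 0 < B := Finset.sum_pos hT2pos hT2ne
        have hdcast : ((S - k : ℕ) : ℝ) = d := by
          rw [hd_def]; push_cast [Nat.cast_sub hkS]; ring
        have hAB : A + B ≤ 1 := by
          rw [hA_def, hB_def, ← Finset.sum_union hdisj]
          rw [← hsum]
          exact Finset.sum_le_sum_of_subset_of_nonneg (Finset.subset_univ _) (fun j _ _ => hp0 j)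
        -- Jensen on T1
        have J1 : ∑ j ∈ T1, Real.log ((S:ℝ) * p j) ≤ (k:ℝ) * Real.log ((S:ℝ) * A / k) := by
          have := mysum_log_le T1 (fun j => (S:ℝ) * p j) hT1ne
            (fun j hj => mul_pos hS' (hT1pos j hj))
          rw [← Finset.mul_sum, hT1card] at this
          exact this
        have J2 : ∑ j ∈ T2, Real.log ((S:ℝ) * p j) ≤ d * Real.log ((S:ℝ) * B / d) := by
          have := mysum_log_le T2 (fun j => (S:ℝ) * p j) hT2ne
            (fun j hj => mul_pos hS' (hT2pos j hj))
          rw [← Finset.mul_sum, hT2card, hdcast] at this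
          exact this
        -- key scalar inequality
        have hlog : ∀ x n : ℝ, 0 < x → 0 < n →
            Real.log ((S:ℝ) * x / n) = Real.log ((S:ℝ) / n) + Real.log x := by
          intro x n hx hn
          rw [show (S:ℝ) * x / n = ((S:ℝ)/n) * x by ring, Real.log_mul (by positivity) hx.ne']
        have hmain : (k:ℝ) * Real.log A + d * Real.log B
            ≤ (k:ℝ) * Real.log (1 - ε) + d * Real.log ε := by
          have m1 : Real.log B ≤ Real.log (1 - A) := Real.log_le_log hBpos (by linarith)
          have hbb : 1 - ε ≤ (k:ℝ) / ((k:ℝ) + d) := by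
            rw [show (k:ℝ) + d = (S:ℝ) by rw [hd_def]; ring]
            linarith
          have m2 := mylog_comb_mono (k:ℝ) d hk' hd hApos hAle hbb
          rw [show (1:ℝ) - (1 - ε) = ε by ring] at m2
          have m3 : d * Real.log B ≤ d * Real.log (1 - A) :=
            mul_le_mul_of_nonneg_left m1 hd.le
          linarith
        have key : (k:ℝ) * Real.log ((S:ℝ) * A / k) + d * Real.log ((S:ℝ) * B / d)
            ≤ (k:ℝ) * Real.log ((S:ℝ) * (1 - ε) / k) + d * Real.log ((S:ℝ) * ε / d) := by
          calc (k:ℝ) * Real.log ((S:ℝ) * A / k) + d * Real.log ((S:ℝ) * B / d)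
              = ((k:ℝ) * Real.log ((S:ℝ)/k) + d * Real.log ((S:ℝ)/d))
                + ((k:ℝ) * Real.log A + d * Real.log B) := by
                rw [hlog A k hApos hk', hlog B d hBpos hd]; ring
            _ ≤ ((k:ℝ) * Real.log ((S:ℝ)/k) + d * Real.log ((S:ℝ)/d))
                + ((k:ℝ) * Real.log (1 - ε) + d * Real.log ε) := by linarith [hmain]
            _ = (k:ℝ) * Real.log ((S:ℝ) * (1 - ε) / k) + d * Real.log ((S:ℝ) * ε / d) := by
                rw [hlog (1-ε) k h1ε hk', hlog ε d hε0 hd]; ring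
        have hsplit : ∑ j ∈ TS, Real.log ((S:ℝ) * p j)
            = ∑ j ∈ T1, Real.log ((S:ℝ) * p j) + ∑ j ∈ T2, Real.log ((S:ℝ) * p j) := by
          rw [hUnion, Finset.sum_union hdisj]
        have hsum_le : ∑ j ∈ TS, Real.log ((S:ℝ) * p j)
            ≤ (k:ℝ) * Real.log ((S:ℝ) * (1 - ε) / k) + d * Real.log ((S:ℝ) * ε / d) := by
          rw [hsplit]; linarith
        rw [hv]
        have hfac : (0:ℝ) ≤ 1/S := by positivity
        have := mul_le_mul_of_nonneg_left hsum_le hfac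
        rw [hd_def] at this ⊢
        have e : (1/(S:ℝ)) * ((k:ℝ) * Real.log ((S:ℝ) * (1 - ε) / k)
              + ((S:ℝ) - (k:ℝ)) * Real.log ((S:ℝ) * ε / ((S:ℝ) - (k:ℝ))))
            = ((k:ℝ)/S) * Real.log ((S:ℝ) * (1 - ε) / k)
              + (((S:ℝ) - (k:ℝ))/S) * Real.log ((S:ℝ) * ε / ((S:ℝ) - (k:ℝ))) := by ring
        linarith [this, e]
      · -- k = S
        have hks : k = S := by omega
        subst hks
        have hJ : ∑ j ∈ TS, Real.log ((k:ℝ) * p j) ≤ (k:ℝ) * Real.log ((k:ℝ) * A / k) := by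
          have hTT : TS = T1 := by rw [hTS, hT1]
          have := mysum_log_le T1 (fun j => (k:ℝ) * p j) hT1ne
            (fun j hj => mul_pos hk' (hT1pos j hj))
          rw [← Finset.mul_sum, hT1card] at this
          rw [hTT]
          exact this
        have h2 : Real.log ((k:ℝ) * A / k) ≤ Real.log ((k:ℝ) * (1 - ε) / k) := by
          apply Real.log_le_log (by positivity)
          gcongr
        have hfin : ∑ j ∈ TS, Real.log ((k:ℝ) * p j)
            ≤ (k:ℝ) * Real.log ((k:ℝ) * (1 - ε) / k) :=
          le_trans hJ (mul_le_mul_of_nonneg_left h2 hk'.le)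
        rw [hv]
        simp only [sub_self, zero_div, zero_mul, sub_zero]
        have hfac : (0:ℝ) ≤ 1/(k:ℝ) := by positivity
        have := mul_le_mul_of_nonneg_left hfin hfac
        have e : (1/(k:ℝ)) * ((k:ℝ) * Real.log ((k:ℝ) * (1 - ε) / k))
            = ((k:ℝ)/(k:ℝ)) * Real.log ((k:ℝ) * (1 - ε) / k) := by ring
        linarith [this, e]
  obtain ⟨f1, f2, f3, f4, f5⟩ := hfacts
  exact ⟨⟨⟨pOpt S k ε, f1, f2, f3, f4, f5.symm⟩, fun v hv => hlb v hv⟩, f1, f2, f3, f4, f5⟩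
end
end

section
/- Let S ≥ 1 and m ≥ 1 be integers, let a_{ℓj} ∈ ℝ for ℓ ∈ {1,…,m} and j ∈ {1,…,S}, let k ∈ {1,…,S}, and let C > 0 satisfy C > a_{ℓj} for all ℓ, j. Then there exists b ∈ {0,1}^S with ∑_{j=1}^S b_j ≤ S−k and a_{ℓj} ≤ C·b_j for all ℓ ∈ {1,…,m} and j ∈ {1,…,S}, if and only if the k-th smallest of the values (max_{ℓ∈{1,…,m}} a_{ℓj})_{j=1,…,S} (counted with multiplicity) is at most 0. -/
open Finset

noncomputable section

lemma sorted_getD_nonpos {L : List ℝ} (hs : L.Pairwise (· ≤ ·)) {k : ℕ}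
    (hk1 : 1 ≤ k) (hkL : k ≤ L.length) :
    L.getD (k - 1) 0 ≤ 0 ↔ k ≤ L.countP (fun x => decide (x ≤ 0)) := by
  have hlt : k - 1 < L.length := by omega
  rw [List.getD_eq_getElem L 0 hlt]
  constructor
  · intro h
    have htake : (L.take k).countP (fun x => decide (x ≤ 0)) = (L.take k).length := by
      rw [List.countP_eq_length]
      intro x hx
      obtain ⟨i, hi, hx⟩ := List.mem_iff_getElem.mp hx
      have hik : i < k := by simp at hi; omega
      have heq : (L.take k)[i] = L[i]'(by omega) := List.getElem_take
      rw [← hx, heq]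
      simp only [decide_eq_true_eq]
      refine le_trans ?_ h
      have := List.Pairwise.rel_get_of_le hs (a := ⟨i, by omega⟩) (b := ⟨k-1, hlt⟩)
        (by simp [Fin.le_def]; omega)
      simpa using this
    have hsub : (L.take k).countP (fun x => decide (x ≤ 0)) ≤ L.countP _ :=
      (List.take_sublist k L).countP_le
    have : (L.take k).length = k := by simp; omega
    omega
  · intro h
    by_contra hpos
    push_neg at hpos
    have key : L.countP (fun x => decide (x ≤ 0)) ≤ k - 1 := by
      have hsplit : L = L.take (k-1) ++ L.drop (k-1) := (List.take_append_drop _ _).symm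
      rw [hsplit, List.countP_append] at h ⊢
      have hdrop : (L.drop (k-1)).countP (fun x => decide (x ≤ 0)) = 0 := by
        rw [List.countP_eq_zero]
        intro x hx
        obtain ⟨i, hi, hx⟩ := List.mem_iff_getElem.mp hx
        have hi' : k - 1 + i < L.length := by simp at hi; omega
        have heq : (L.drop (k-1))[i] = L[k-1+i]'hi' := List.getElem_drop
        simp only [decide_eq_true_eq, not_le]
        rw [← hx, heq]
        refine lt_of_lt_of_le hpos ?_
        have := List.Pairwise.rel_get_of_le hs (a := ⟨k-1, hlt⟩) (b := ⟨k-1+i, hi'⟩)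
          (by simp [Fin.le_def])
        simpa using this
      have := (L.take (k-1)).countP_le_length (p := fun x => decide (x ≤ 0))
      have hlen : (L.take (k-1)).length ≤ k - 1 := by simp
      omega
    omega

lemma countP_ofFn {N : ℕ} (v : Fin N → ℝ) (q : ℝ → Prop) [DecidablePred q] :
    (List.ofFn v).countP (fun x => decide (q x)) = (Finset.univ.filter (fun j => q (v j))).card := by
  rw [← Multiset.coe_countP, ← Fin.univ_val_map, Multiset.countP_eq_card_filter,
    Multiset.filter_map, Multiset.card_map, Finset.card_def, Finset.filter_val]
  rfl

lemma kth_le_iff {N : ℕ} (v : Fin N → ℝ) {k : ℕ} (hk1 : 1 ≤ k) (hkN : k ≤ N) :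
    kthSmallest v k ≤ 0 ↔ k ≤ (Finset.univ.filter (fun j => v j ≤ 0)).card := by
  set L := Multiset.sort (Multiset.ofList (List.ofFn v)) (· ≤ ·) with hL
  have hs : L.Pairwise (· ≤ ·) := Multiset.pairwise_sort _ _
  have hlen : L.length = N := by
    rw [hL, Multiset.length_sort]
    simp
  have hcount : L.countP (fun x => decide (x ≤ 0)) =
      (List.ofFn v).countP (fun x => decide (x ≤ 0)) := by
    have h1 : (L : Multiset ℝ) = Multiset.ofList (List.ofFn v) := Multiset.sort_eq _ _
    have h2 := Multiset.coe_countP (p := fun x : ℝ => x ≤ 0) L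
    have h3 := Multiset.coe_countP (p := fun x : ℝ => x ≤ 0) (List.ofFn v)
    rw [← h2, ← h3, h1]
  rw [kthSmallest, ← hL, sorted_getD_nonpos hs hk1 (by omega), hcount,
    countP_ofFn]

/-- Per-point content of the big-M reformulation: with a sufficiently large constant `C`,
there is a binary vector `b` with at most `S − k` ones satisfying `a_{ℓj} ≤ C·b_j` for all
`ℓ, j`, iff the `k`-th smallest of the columnwise maxima `max_ℓ a_{ℓj}` is at most `0`. -/
theorem stmt11 {S m : ℕ} (hS : 1 ≤ S) (hm : 1 ≤ m)
    (a : Fin m → Fin S → ℝ) (k : ℕ) (hk1 : 1 ≤ k) (hkS : k ≤ S)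
    (C : ℝ) (hC0 : 0 < C) (hC : ∀ ℓ j, a ℓ j < C) :
    (∃ b : Fin S → ℕ,
      (∀ j, b j ≤ 1) ∧ (∑ j, b j) ≤ S - k ∧
      ∀ ℓ j, a ℓ j ≤ C * (b j : ℝ)) ↔
    kthSmallest
      (fun j => Finset.univ.sup' ⟨⟨0, hm⟩, Finset.mem_univ _⟩ fun ℓ => a ℓ j) k ≤ 0 := by
  set g : Fin S → ℝ := fun j => Finset.univ.sup' ⟨⟨0, hm⟩, Finset.mem_univ _⟩ fun ℓ => a ℓ j
    with hg
  rw [kth_le_iff g hk1 hkS]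
  constructor
  · rintro ⟨b, hb1, hbsum, hba⟩
    have hZsub : (Finset.univ.filter (fun j => b j = 0)) ⊆
        (Finset.univ.filter (fun j => g j ≤ 0)) := by
      intro j hj
      simp only [Finset.mem_filter, Finset.mem_univ, true_and] at hj ⊢
      refine Finset.sup'_le _ _ fun ℓ _ => ?_
      have := hba ℓ j
      rw [hj] at this
      simpa using this
    have hsum : (∑ j, b j) = (Finset.univ.filter (fun j => ¬ (b j = 0))).card := by
      rw [Finset.card_filter]
      refine Finset.sum_congr rfl fun j _ => ?_
      have := hb1 j
      by_cases h : b j = 0 <;> simp [h] <;> omega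
    have hpart : (Finset.univ.filter (fun j => b j = 0)).card +
        (Finset.univ.filter (fun j => ¬ (b j = 0))).card = S := by
      rw [Finset.card_filter_add_card_filter_not]
      simp
    have := Finset.card_le_card hZsub
    omega
  · intro h
    refine ⟨fun j => if g j ≤ 0 then 0 else 1, fun j => by dsimp; split <;> omega, ?_, ?_⟩
    · have hsum : (∑ j, (if g j ≤ 0 then 0 else 1)) =
          (Finset.univ.filter (fun j => ¬ (g j ≤ 0))).card := by
        rw [Finset.card_filter]
        refine Finset.sum_congr rfl fun j _ => ?_
        by_cases hj : g j ≤ 0 <;> simp [hj]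
      rw [hsum]
      have hpart : (Finset.univ.filter (fun j => g j ≤ 0)).card +
          (Finset.univ.filter (fun j => ¬ (g j ≤ 0))).card = S := by
        rw [Finset.card_filter_add_card_filter_not]
        simp
      omega
    · intro ℓ j
      by_cases hj : g j ≤ 0
      · simp only [hj, if_pos]
        have : a ℓ j ≤ g j := Finset.le_sup' (fun ℓ => a ℓ j) (Finset.mem_univ ℓ)
        push_cast
        linarith
      · simp only [hj, if_neg, not_false_iff]
        push_cast
        rw [mul_one]
        exact (hC ℓ j).le
end
end
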